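/- For every matrix A in the special orthogonal group SO(3) there exists a unit quaternion q such that for every vector x = (x₁, x₂, x₃) ∈ ℝ³, the pure quaternion with coordinate vector A·x equals q * v * q⁻¹, where v is the pure quaternion x₁i + x₂j + x₃k. That is, the conjugation map from unit quaternions to SO(3) is surjective, so S³ double covers SO(3). -/

import Mathlib

set_option maxHeartbeats 1000000
/-- The pure quaternion with coordinate vector `x`, i.e. `x₁ i + x₂ j + x₃ k`. -/
def pureQuat (x : Fin 3 → ℝ) : Quaternion ℝ := ⟨0, x 0, x 1, x 2⟩

noncomputable section SO3Aux
open Real Matrix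

lemma norm_of_normSq {q : Quaternion ℝ} (h : Quaternion.normSq q = 1) : ‖q‖ = 1 := by
  have h2 := Quaternion.normSq_eq_norm_mul_self q
  nlinarith [norm_nonneg q]

lemma inv_of_normSq {q : Quaternion ℝ} (h : Quaternion.normSq q = 1) : q⁻¹ = star q := by
  rw [Quaternion.inv_def, h, inv_one, one_smul]

def Rxm (θ : ℝ) : Matrix (Fin 3) (Fin 3) ℝ := !![1,0,0; 0, cos θ, -sin θ; 0, sin θ, cos θ]
def Rym (θ : ℝ) : Matrix (Fin 3) (Fin 3) ℝ := !![cos θ,0,sin θ; 0,1,0; -sin θ,0,cos θ]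
def Rzm (θ : ℝ) : Matrix (Fin 3) (Fin 3) ℝ := !![cos θ,-sin θ,0; sin θ,cos θ,0; 0,0,1]

def Good (A : Matrix (Fin 3) (Fin 3) ℝ) : Prop :=
  ∃ q : Quaternion ℝ, ‖q‖ = 1 ∧ ∀ x : Fin 3 → ℝ, pureQuat (A.mulVec x) = q * pureQuat x * q⁻¹

lemma good_mul {A B : Matrix (Fin 3) (Fin 3) ℝ} (hA : Good A) (hB : Good B) : Good (A * B) := by
  obtain ⟨p, hp1, hp2⟩ := hA
  obtain ⟨q, hq1, hq2⟩ := hB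
  refine ⟨p * q, by rw [norm_mul, hp1, hq1, mul_one], fun x => ?_⟩
  rw [← Matrix.mulVec_mulVec, hp2, hq2, _root_.mul_inv_rev]
  simp [mul_assoc]

lemma half_lemmas (θ : ℝ) : cos (θ/2)^2 + sin (θ/2)^2 = 1 ∧
    cos θ = cos (θ/2)^2 - sin (θ/2)^2 ∧ sin θ = 2 * sin (θ/2) * cos (θ/2) := by
  have h2 := cos_two_mul (θ/2)
  have h3 := sin_two_mul (θ/2)
  rw [show (2:ℝ)*(θ/2) = θ by ring] at h2 h3
  have h4 := sin_sq_add_cos_sq (θ/2)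
  exact ⟨by linarith, by linarith, by linarith⟩

lemma good_Rx (θ : ℝ) : Good (Rxm θ) := by
  obtain ⟨hcs, hc2, hs2⟩ := half_lemmas θ
  set c := cos (θ/2); set s := sin (θ/2)
  clear_value c s
  set q : Quaternion ℝ := ⟨c, s, 0, 0⟩ with hq
  have hns : Quaternion.normSq q = 1 := by
    rw [Quaternion.normSq_def']; simp [hq]; linear_combination hcs
  refine ⟨q, norm_of_normSq hns, fun x => ?_⟩
  rw [inv_of_normSq hns]
  ext <;>
    simp only [Quaternion.re_mul, Quaternion.imI_mul, Quaternion.imJ_mul, Quaternion.imK_mul,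
      Quaternion.re_star, Quaternion.imI_star, Quaternion.imJ_star, Quaternion.imK_star] <;>
    simp [pureQuat, Rxm, hq, Matrix.mulVec, dotProduct, Fin.sum_univ_three,
      Quaternion.re_mul, Quaternion.imI_mul, Quaternion.imJ_mul, Quaternion.imK_mul, hc2, hs2]
  all_goals first
    | ring1
    | linear_combination (-(x 0)) * hcs
    | linear_combination (-(x 1)) * hcs
    | linear_combination (-(x 2)) * hcs

lemma good_Ry (θ : ℝ) : Good (Rym θ) := by
  obtain ⟨hcs, hc2, hs2⟩ := half_lemmas θ
  set c := cos (θ/2); set s := sin (θ/2)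
  clear_value c s
  set q : Quaternion ℝ := ⟨c, 0, s, 0⟩ with hq
  have hns : Quaternion.normSq q = 1 := by
    rw [Quaternion.normSq_def']; simp [hq]; linear_combination hcs
  refine ⟨q, norm_of_normSq hns, fun x => ?_⟩
  rw [inv_of_normSq hns]
  ext <;>
    simp only [Quaternion.re_mul, Quaternion.imI_mul, Quaternion.imJ_mul, Quaternion.imK_mul,
      Quaternion.re_star, Quaternion.imI_star, Quaternion.imJ_star, Quaternion.imK_star] <;>
    simp [pureQuat, Rym, hq, Matrix.mulVec, dotProduct, Fin.sum_univ_three,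
      Quaternion.re_mul, Quaternion.imI_mul, Quaternion.imJ_mul, Quaternion.imK_mul, hc2, hs2]
  all_goals first
    | ring1
    | linear_combination (-(x 0)) * hcs
    | linear_combination (-(x 1)) * hcs
    | linear_combination (-(x 2)) * hcs

lemma good_Rz (θ : ℝ) : Good (Rzm θ) := by
  obtain ⟨hcs, hc2, hs2⟩ := half_lemmas θ
  set c := cos (θ/2); set s := sin (θ/2)
  clear_value c s
  set q : Quaternion ℝ := ⟨c, 0, 0, s⟩ with hq
  have hns : Quaternion.normSq q = 1 := by
    rw [Quaternion.normSq_def']; simp [hq]; linear_combination hcs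
  refine ⟨q, norm_of_normSq hns, fun x => ?_⟩
  rw [inv_of_normSq hns]
  ext <;>
    simp only [Quaternion.re_mul, Quaternion.imI_mul, Quaternion.imJ_mul, Quaternion.imK_mul,
      Quaternion.re_star, Quaternion.imI_star, Quaternion.imJ_star, Quaternion.imK_star] <;>
    simp [pureQuat, Rzm, hq, Matrix.mulVec, dotProduct, Fin.sum_univ_three,
      Quaternion.re_mul, Quaternion.imI_mul, Quaternion.imJ_mul, Quaternion.imK_mul, hc2, hs2]
  all_goals first
    | ring1
    | linear_combination (-(x 0)) * hcs
    | linear_combination (-(x 1)) * hcs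
    | linear_combination (-(x 2)) * hcs

lemma exists_cos_sin {p q : ℝ} (h : p^2 + q^2 = 1) : ∃ θ, cos θ = p ∧ sin θ = q := by
  have hz : (⟨p,q⟩ : ℂ) ≠ 0 := by
    intro h0
    rw [Complex.ext_iff] at h0
    simp at h0
    nlinarith [h0.1, h0.2]
  have habs : ‖(⟨p,q⟩ : ℂ)‖ = 1 := by
    rw [Complex.norm_def, Complex.normSq_apply]
    simp
    nlinarith [Real.sqrt_one]
  exact ⟨Complex.arg ⟨p,q⟩, by rw [Complex.cos_arg hz, habs]; simp,
    by rw [Complex.sin_arg, habs]; simp⟩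

lemma star_Rz (θ : ℝ) : star (Rzm θ) = !![cos θ, sin θ, 0; -sin θ, cos θ, 0; 0,0,1] := by
  ext i j
  fin_cases i <;> fin_cases j <;>
    simp [Rzm, Matrix.star_eq_conjTranspose, Matrix.conjTranspose_apply]

lemma star_Ry (θ : ℝ) : star (Rym θ) = !![cos θ, 0, -sin θ; 0,1,0; sin θ, 0, cos θ] := by
  ext i j
  fin_cases i <;> fin_cases j <;>
    simp [Rym, Matrix.star_eq_conjTranspose, Matrix.conjTranspose_apply]

lemma Rz_mul_star (θ : ℝ) : Rzm θ * star (Rzm θ) = 1 := by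
  rw [star_Rz]; ext i j
  fin_cases i <;> fin_cases j <;>
    simp [Rzm, Matrix.mul_apply, Fin.sum_univ_three, Matrix.one_apply] <;>
    first | ring1 | linear_combination sin_sq_add_cos_sq θ

lemma star_mul_Rz (θ : ℝ) : star (Rzm θ) * Rzm θ = 1 := by
  rw [star_Rz]; ext i j
  fin_cases i <;> fin_cases j <;>
    simp [Rzm, Matrix.mul_apply, Fin.sum_univ_three, Matrix.one_apply] <;>
    first | ring1 | linear_combination sin_sq_add_cos_sq θ

lemma Ry_mul_star (θ : ℝ) : Rym θ * star (Rym θ) = 1 := by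
  rw [star_Ry]; ext i j
  fin_cases i <;> fin_cases j <;>
    simp [Rym, Matrix.mul_apply, Fin.sum_univ_three, Matrix.one_apply] <;>
    first | ring1 | linear_combination sin_sq_add_cos_sq θ

lemma star_mul_Ry (θ : ℝ) : star (Rym θ) * Rym θ = 1 := by
  rw [star_Ry]; ext i j
  fin_cases i <;> fin_cases j <;>
    simp [Rym, Matrix.mul_apply, Fin.sum_univ_three, Matrix.one_apply] <;>
    first | ring1 | linear_combination sin_sq_add_cos_sq θ

lemma Rz_neg_mul (θ : ℝ) : Rzm (-θ) * Rzm θ = 1 := by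
  ext i j
  fin_cases i <;> fin_cases j <;>
    simp [Rzm, Matrix.mul_apply, Fin.sum_univ_three, Matrix.one_apply] <;>
    first | ring1 | linear_combination sin_sq_add_cos_sq θ

lemma Ry_neg_mul (θ : ℝ) : Rym (-θ) * Rym θ = 1 := by
  ext i j
  fin_cases i <;> fin_cases j <;>
    simp [Rym, Matrix.mul_apply, Fin.sum_univ_three, Matrix.one_apply] <;>
    first | ring1 | linear_combination sin_sq_add_cos_sq θ

lemma det_Rz (θ : ℝ) : (Rzm θ).det = 1 := by
  simp [Rzm, Matrix.det_fin_three]; linear_combination sin_sq_add_cos_sq θ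

lemma det_Ry (θ : ℝ) : (Rym θ).det = 1 := by
  simp [Rym, Matrix.det_fin_three]; linear_combination sin_sq_add_cos_sq θ

end SO3Aux

/-- Every matrix in SO(3) arises as conjugation by some unit quaternion: the map from unit
quaternions to SO(3) is surjective. -/
theorem SO3_eq_conj_unit_quaternion (A : Matrix (Fin 3) (Fin 3) ℝ)
    (hA : A ∈ Matrix.specialOrthogonalGroup (Fin 3) ℝ) :
    ∃ q : Quaternion ℝ, ‖q‖ = 1 ∧
      ∀ x : Fin 3 → ℝ, pureQuat (A.mulVec x) = q * pureQuat x * q⁻¹ := by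
  have hsA : star A * A = 1 := hA.1.1
  have hAs : A * star A = 1 := hA.1.2
  have hdet : A.det = 1 := hA.2
  -- first column has norm 1
  have hcol : A 0 0^2 + A 1 0^2 + A 2 0^2 = 1 := by
    have h := Matrix.ext_iff.mpr hsA 0 0
    simp [Matrix.mul_apply, Fin.sum_univ_three, Matrix.one_apply,
      Matrix.star_eq_conjTranspose, Matrix.conjTranspose_apply] at h
    linear_combination h
  set r := Real.sqrt (A 0 0^2 + A 1 0^2) with hrdef
  have hr0 : 0 ≤ r := Real.sqrt_nonneg _
  have hr2 : r^2 = A 0 0^2 + A 1 0^2 := Real.sq_sqrt (by positivity)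
  obtain ⟨c1, s1, hc1s1, h1, h2⟩ :
      ∃ c1 s1 : ℝ, c1^2 + s1^2 = 1 ∧ c1 * A 0 0 - s1 * A 1 0 = r ∧
        s1 * A 0 0 + c1 * A 1 0 = 0 := by
    by_cases hr : r = 0
    · have ha : A 0 0 = 0 := by nlinarith [sq_nonneg (A 0 0), sq_nonneg (A 1 0)]
      have hb : A 1 0 = 0 := by nlinarith [sq_nonneg (A 0 0), sq_nonneg (A 1 0)]
      exact ⟨1, 0, by norm_num, by rw [ha, hb, hr]; ring, by rw [ha, hb]; ring⟩
    · refine ⟨A 0 0 / r, -(A 1 0) / r, ?_, ?_, ?_⟩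
      · field_simp
        linarith [hr2]
      · field_simp
        nlinarith [hr2]
      · field_simp
        ring
  obtain ⟨θ1, hθ1c, hθ1s⟩ := exists_cos_sin hc1s1
  have hrc : r^2 + A 2 0^2 = 1 := by rw [hr2]; linarith
  obtain ⟨θ2, hθ2c, hθ2s⟩ := exists_cos_sin hrc
  set P := Rym θ2 * (Rzm θ1 * A) with hPdef
  clear_value P
  have hPs : P * star P = 1 := by
    rw [hPdef]
    simp only [StarMul.star_mul, Matrix.mul_assoc]
    rw [← Matrix.mul_assoc A, hAs, Matrix.one_mul, ← Matrix.mul_assoc (Rzm θ1),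
      Rz_mul_star, Matrix.one_mul, Ry_mul_star]
  have hsP : star P * P = 1 := by
    rw [hPdef]
    simp only [StarMul.star_mul, Matrix.mul_assoc]
    rw [← Matrix.mul_assoc (star (Rym θ2)), star_mul_Ry, Matrix.one_mul,
      ← Matrix.mul_assoc (star (Rzm θ1)), star_mul_Rz, Matrix.one_mul, hsA]
  have hPdet : P.det = 1 := by
    rw [hPdef, Matrix.det_mul, Matrix.det_mul, det_Ry, det_Rz, hdet]; ring
  -- first column of Rzm θ1 * A
  have hB0 : (Rzm θ1 * A) 0 0 = r := by
    rw [Matrix.mul_apply, Fin.sum_univ_three]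
    simp [Rzm, hθ1c, hθ1s]
    linear_combination h1
  have hB1 : (Rzm θ1 * A) 1 0 = 0 := by
    rw [Matrix.mul_apply, Fin.sum_univ_three]
    simp [Rzm, hθ1c, hθ1s]
    linear_combination h2
  have hB2 : (Rzm θ1 * A) 2 0 = A 2 0 := by
    rw [Matrix.mul_apply, Fin.sum_univ_three]
    simp [Rzm]
  -- first column of P
  have hP00 : P 0 0 = 1 := by
    rw [hPdef, Matrix.mul_apply, Fin.sum_univ_three, hB0, hB1, hB2]
    simp [Rym, hθ2c, hθ2s]
    linear_combination hrc
  have hP10 : P 1 0 = 0 := by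
    rw [hPdef, Matrix.mul_apply, Fin.sum_univ_three, hB0, hB1, hB2]
    simp [Rym]
  have hP20 : P 2 0 = 0 := by
    rw [hPdef, Matrix.mul_apply, Fin.sum_univ_three, hB0, hB1, hB2]
    simp [Rym, hθ2c, hθ2s]
    ring
  -- first row of P
  have e00 := Matrix.ext_iff.mpr hPs 0 0
  simp [Matrix.mul_apply, Fin.sum_univ_three, Matrix.one_apply,
    Matrix.star_eq_conjTranspose, Matrix.conjTranspose_apply, hP00] at e00
  have hP01 : P 0 1 = 0 := by nlinarith [sq_nonneg (P 0 1), sq_nonneg (P 0 2)]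
  have hP02 : P 0 2 = 0 := by nlinarith [sq_nonneg (P 0 1), sq_nonneg (P 0 2)]
  -- column norms
  have e11 := Matrix.ext_iff.mpr hsP 1 1
  simp [Matrix.mul_apply, Fin.sum_univ_three, Matrix.one_apply,
    Matrix.star_eq_conjTranspose, Matrix.conjTranspose_apply, hP01] at e11
  have e22 := Matrix.ext_iff.mpr hsP 2 2
  simp [Matrix.mul_apply, Fin.sum_univ_three, Matrix.one_apply,
    Matrix.star_eq_conjTranspose, Matrix.conjTranspose_apply, hP02] at e22
  have edet := hPdet
  rw [Matrix.det_fin_three] at edet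
  rw [hP00, hP01, hP02, hP10, hP20] at edet
  have key : (P 1 2 + P 2 1)^2 + (P 2 2 - P 1 1)^2 = 0 := by
    linear_combination e11 + e22 - 2*edet
  have k1 : (P 1 2 + P 2 1)^2 = 0 := by nlinarith [sq_nonneg (P 1 2 + P 2 1), sq_nonneg (P 2 2 - P 1 1)]
  have k2 : (P 2 2 - P 1 1)^2 = 0 := by nlinarith [sq_nonneg (P 1 2 + P 2 1), sq_nonneg (P 2 2 - P 1 1)]
  have hP12 : P 1 2 = -(P 2 1) := by have := sq_eq_zero_iff.mp k1; linarith
  have hP22 : P 2 2 = P 1 1 := by have := sq_eq_zero_iff.mp k2; linarith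
  have h11 : (P 1 1)^2 + (P 2 1)^2 = 1 := by linear_combination e11
  obtain ⟨θ3, hθ3c, hθ3s⟩ := exists_cos_sin h11
  have hPRx : P = Rxm θ3 := by
    ext i j
    fin_cases i <;> fin_cases j <;>
      simp [Rxm, Matrix.vecHead, Matrix.vecTail, hθ3c, hθ3s, hP00, hP01, hP02, hP10, hP20, hP12, hP22]
  have hAeq : A = Rzm (-θ1) * (Rym (-θ2) * Rxm θ3) := by
    rw [← hPRx, hPdef, ← Matrix.mul_assoc (Rym (-θ2)), Ry_neg_mul, Matrix.one_mul,
      ← Matrix.mul_assoc (Rzm (-θ1)), Rz_neg_mul, Matrix.one_mul]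
  have : Good A := by
    rw [hAeq]
    exact good_mul (good_Rz _) (good_mul (good_Ry _) (good_Rx _))
  exact this
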